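/- Let ν ≥ 2, p₀ ∈ ℝ, g₀ > 0, x₀ ∈ ℝ, f₀ ∈ ℝ. Define f₊(x) = −((ν−1)/ν) log(1 − (x−x₀)(p₀ − g₀/√(ν−1))) − (1/ν) log(1 − (x−x₀)(p₀ + g₀√(ν−1))) + f₀ on the open set where both logarithm arguments are positive. Then f₊(x₀) = f₀, f₊'(x₀) = p₀, f₊''(x₀) = p₀² + g₀², and f₊ satisfies f₊'''(x) − 6f₊''(x)f₊'(x) + 4(f₊'(x))³ = 2γ(f₊''(x) − (f₊'(x))²)^{3/2} with γ = (ν−2)/√(ν−1), and f₊''(x) − (f₊'(x))² > 0, on its domain. -/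

import Mathlib

set_option linter.all false

set_option maxHeartbeats 1000000 in
theorem stmt_7 (ν p₀ g₀ x₀ f₀ : ℝ) (hν : 2 ≤ ν) (hg : 0 < g₀)
    (γ : ℝ) (hγ : γ = (ν - 2)/Real.sqrt (ν - 1))
    (f : ℝ → ℝ)
    (hf : f = fun x => -((ν-1)/ν) * Real.log (1 - (x - x₀)*(p₀ - g₀/Real.sqrt (ν-1)))
        - (1/ν) * Real.log (1 - (x - x₀)*(p₀ + g₀*Real.sqrt (ν-1))) + f₀)
    (I : Set ℝ)
    (hI : I = {x : ℝ | 0 < 1 - (x - x₀)*(p₀ - g₀/Real.sqrt (ν-1)) ∧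
                       0 < 1 - (x - x₀)*(p₀ + g₀*Real.sqrt (ν-1))}) :
    f x₀ = f₀ ∧ deriv f x₀ = p₀ ∧ deriv (deriv f) x₀ = p₀^2 + g₀^2 ∧
    ∀ x ∈ I,
      deriv (deriv (deriv f)) x - 6 * deriv (deriv f) x * deriv f x + 4 * (deriv f x)^3
        = 2*γ*(deriv (deriv f) x - (deriv f x)^2) ^ ((3:ℝ)/2) ∧
      0 < deriv (deriv f) x - (deriv f x)^2 := by
  have hs2' : Real.sqrt (ν-1) ^ 2 = ν - 1 := Real.sq_sqrt (by linarith)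
  have hs1 : 1 ≤ Real.sqrt (ν-1) := by
    nlinarith [Real.sqrt_nonneg (ν-1)]
  obtain ⟨s, hsdef⟩ : ∃ s, Real.sqrt (ν - 1) = s := ⟨_, rfl⟩
  rw [hsdef] at hs2' hs1 hγ hf hI
  have hν2 : ν = s^2 + 1 := by linarith
  subst hν2
  subst hγ hI
  have hs0 : (0:ℝ) < s := by linarith
  have hsne : s ≠ 0 := ne_of_gt hs0
  have hs2pos : (0:ℝ) < s^2 + 1 := by positivity
  have hs2ne : (s^2 + 1 : ℝ) ≠ 0 := ne_of_gt hs2pos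
  obtain ⟨a, ha⟩ : ∃ a : ℝ, p₀ - g₀/s = a := ⟨_, rfl⟩
  obtain ⟨b, hb⟩ : ∃ b : ℝ, p₀ + g₀*s = b := ⟨_, rfl⟩
  rw [ha, hb] at hf ⊢
  obtain ⟨G1, hG1⟩ : ∃ G : ℝ → ℝ, G = fun x => (s^2/(s^2+1)) * (a / (1 - (x - x₀)*a))
        + (1 - s^2/(s^2+1)) * (b / (1 - (x - x₀)*b)) := ⟨_, rfl⟩
  obtain ⟨G2, hG2⟩ : ∃ G : ℝ → ℝ, G = fun x => (s^2/(s^2+1)) * (a / (1 - (x - x₀)*a))^2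
        + (1 - s^2/(s^2+1)) * (b / (1 - (x - x₀)*b))^2 := ⟨_, rfl⟩
  obtain ⟨G3, hG3⟩ : ∃ G : ℝ → ℝ, G = fun x => 2*((s^2/(s^2+1)) * (a / (1 - (x - x₀)*a))^3
        + (1 - s^2/(s^2+1)) * (b / (1 - (x - x₀)*b))^3) := ⟨_, rfl⟩
  have hAder : ∀ x : ℝ, HasDerivAt (fun y => 1 - (y - x₀)*a) (-a) x := fun x => by
    simpa using (((hasDerivAt_id x).sub_const x₀).mul_const a).const_sub 1
  have hBder : ∀ x : ℝ, HasDerivAt (fun y => 1 - (y - x₀)*b) (-b) x := fun x => by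
    simpa using (((hasDerivAt_id x).sub_const x₀).mul_const b).const_sub 1
  have hFder : ∀ x : ℝ, (1 - (x - x₀)*a) ≠ 0 → (1 - (x - x₀)*b) ≠ 0 →
      HasDerivAt f (G1 x) x := by
    intro x hA hB
    rw [hf]
    have h1 := ((hAder x).log hA).const_mul (-((s^2+1-1)/(s^2+1)))
    have h2 := ((hBder x).log hB).const_mul ((1:ℝ)/(s^2+1))
    have h3 := (h1.sub h2).add_const f₀
    refine h3.congr_deriv ?_
    simp only [hG1]
    field_simp
    ring
  have hG1der : ∀ x : ℝ, (1 - (x - x₀)*a) ≠ 0 → (1 - (x - x₀)*b) ≠ 0 →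
      HasDerivAt G1 (G2 x) x := by
    intro x hA hB
    rw [hG1]
    have h1 := ((hasDerivAt_const x a).div (hAder x) hA).const_mul (s^2/(s^2+1))
    have h2 := ((hasDerivAt_const x b).div (hBder x) hB).const_mul (1 - s^2/(s^2+1))
    have h3 := h1.add h2
    refine h3.congr_deriv ?_
    simp only [hG2]
    field_simp
    ring
  have hG2der : ∀ x : ℝ, (1 - (x - x₀)*a) ≠ 0 → (1 - (x - x₀)*b) ≠ 0 →
      HasDerivAt G2 (G3 x) x := by
    intro x hA hB
    rw [hG2]
    have h1 := (((hasDerivAt_const x a).div (hAder x) hA).pow 2).const_mul (s^2/(s^2+1))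
    have h2 := (((hasDerivAt_const x b).div (hBder x) hB).pow 2).const_mul (1 - s^2/(s^2+1))
    have h3 := h1.add h2
    refine h3.congr_deriv ?_
    simp only [hG3, Pi.div_apply, Nat.cast_ofNat, Nat.reduceSub, pow_one]
    generalize 1 - (x - x₀)*a = A at hA ⊢
    generalize 1 - (x - x₀)*b = B at hB ⊢
    field_simp
    ring
  have hIo : IsOpen {x : ℝ | 0 < 1 - (x - x₀)*a ∧ 0 < 1 - (x - x₀)*b} := by
    have hca : Continuous fun x : ℝ => 1 - (x - x₀)*a := by fun_prop
    have hcb : Continuous fun x : ℝ => 1 - (x - x₀)*b := by fun_prop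
    exact (isOpen_lt continuous_const hca).inter (isOpen_lt continuous_const hcb)
  have hd1 : ∀ x ∈ {x : ℝ | 0 < 1 - (x - x₀)*a ∧ 0 < 1 - (x - x₀)*b},
      deriv f x = G1 x := fun x hx => (hFder x (ne_of_gt hx.1) (ne_of_gt hx.2)).deriv
  have hd2 : ∀ x ∈ {x : ℝ | 0 < 1 - (x - x₀)*a ∧ 0 < 1 - (x - x₀)*b},
      deriv (deriv f) x = G2 x := by
    intro x hx
    have hev : deriv f =ᶠ[nhds x] G1 :=
      Filter.eventually_of_mem (hIo.mem_nhds hx) hd1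
    rw [hev.deriv_eq]
    exact (hG1der x (ne_of_gt hx.1) (ne_of_gt hx.2)).deriv
  have hd3 : ∀ x ∈ {x : ℝ | 0 < 1 - (x - x₀)*a ∧ 0 < 1 - (x - x₀)*b},
      deriv (deriv (deriv f)) x = G3 x := by
    intro x hx
    have hev : deriv (deriv f) =ᶠ[nhds x] G2 :=
      Filter.eventually_of_mem (hIo.mem_nhds hx) hd2
    rw [hev.deriv_eq]
    exact (hG2der x (ne_of_gt hx.1) (ne_of_gt hx.2)).deriv
  have hx₀ : x₀ ∈ {x : ℝ | 0 < 1 - (x - x₀)*a ∧ 0 < 1 - (x - x₀)*b} := by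
    constructor <;> · simp
  refine ⟨?_, ?_, ?_, ?_⟩
  · rw [hf]; simp
  · rw [hd1 x₀ hx₀]
    simp only [hG1, sub_self, zero_mul, mul_zero, sub_zero, div_one]
    rw [← ha, ← hb]
    field_simp
    ring
  · rw [hd2 x₀ hx₀]
    simp only [hG2, sub_self, zero_mul, mul_zero, sub_zero, div_one]
    rw [← ha, ← hb]
    field_simp
    ring
  · intro x hx
    rw [hd1 x hx, hd2 x hx, hd3 x hx]
    obtain ⟨A, hAdef⟩ : ∃ A : ℝ, 1 - (x - x₀)*a = A := ⟨_, rfl⟩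
    obtain ⟨B, hBdef⟩ : ∃ B : ℝ, 1 - (x - x₀)*b = B := ⟨_, rfl⟩
    have hA0 : (0:ℝ) < A := by rw [← hAdef]; exact hx.1
    have hB0 : (0:ℝ) < B := by rw [← hBdef]; exact hx.2
    have hAne : A ≠ 0 := ne_of_gt hA0
    have hBne : B ≠ 0 := ne_of_gt hB0
    obtain ⟨u, hu⟩ : ∃ u : ℝ, a / A = u := ⟨_, rfl⟩
    obtain ⟨v, hv⟩ : ∃ v : ℝ, b / B = v := ⟨_, rfl⟩
    obtain ⟨c, hc⟩ : ∃ c : ℝ, s^2/(s^2+1) = c := ⟨_, rfl⟩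
    have e1 : G1 x = c*u + (1-c)*v := by
      simp only [hG1]; rw [hAdef, hBdef, hu, hv, hc]
    have e2 : G2 x = c*u^2 + (1-c)*v^2 := by
      simp only [hG2]; rw [hAdef, hBdef, hu, hv, hc]
    have e3 : G3 x = 2*(c*u^3 + (1-c)*v^3) := by
      simp only [hG3]; rw [hAdef, hBdef, hu, hv, hc]
    have hba : b*A - a*B = g₀*(s^2+1)/s := by
      rw [← hAdef, ← hBdef, ← ha, ← hb]
      field_simp
      ring
    have hvu : v - u = (g₀*(s^2+1)/s)/(A*B) := by
      rw [← hu, ← hv, ← hba]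
      field_simp
    have hE : G2 x - (G1 x)^2 = (g₀/(A*B))^2 := by
      rw [e1, e2]
      refine Eq.trans (b := c*(1-c)*(v-u)^2) (by ring) ?_
      rw [hvu, ← hc]
      field_simp
      ring
    have hpos : 0 < g₀/(A*B) := by positivity
    constructor
    · rw [hE]
      have hrw : ((g₀/(A*B))^2) ^ ((3:ℝ)/2) = (g₀/(A*B))^3 := by
        rw [← Real.rpow_natCast (g₀/(A*B)) 2, ← Real.rpow_mul hpos.le]
        norm_num
      rw [hrw, e1, e2, e3]
      refine Eq.trans (b := 2*(c*(1-c)*(2*c-1))*(v-u)^3) (by ring) ?_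
      rw [hvu, ← hc]
      field_simp
      ring
    · rw [hE]
      positivity
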